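/- Let a/b and c/d be two Farey-neighbors, given in reduced form. Then a Farey vertex x forms a Farey triangle together with a/b and c/d if and only if x = (a+c)/(b+d) or x = (a−c)/(b−d); in particular, every pair of Farey-neighbors is contained in exactly two Farey triangles. -/

import Mathlib

/-- A Farey vertex is an element of `ℚ ∪ {∞}`; `none` represents `∞`. -/
abbrev FareyVertex := Option ℚ

/-- The numerator of the reduced form `a/b` (with `b ≥ 0`) of a Farey vertex; `∞ = 1/0`. -/
def fnum : FareyVertex → ℤ
  | none => 1
  | some r => r.num

/-- The denominator of the reduced form `a/b` (with `b ≥ 0`) of a Farey vertex; `∞ = 1/0`. -/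
def fden : FareyVertex → ℤ
  | none => 0
  | some r => (r.den : ℤ)

/-- Two Farey vertices with reduced forms `a/b` and `c/d` are Farey-neighbors if `|ad - bc| = 1`. -/
def FareyNeighbor (x y : FareyVertex) : Prop :=
  |fnum x * fden y - fden x * fnum y| = 1

/-- A Farey triangle: a set of three distinct pairwise Farey-neighbor Farey vertices. -/
@[ext]
structure FareyTriangle where
  verts : Finset FareyVertex
  card_eq : verts.card = 3
  neighbors : ∀ x ∈ verts, ∀ y ∈ verts, x ≠ y → FareyNeighbor x y

/-- The Farey tree `Σ`: vertices are the Farey triangles, two triangles being adjacent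
if and only if their intersection has exactly two elements. -/
def fareyTree : SimpleGraph FareyTriangle where
  Adj T T' := (T.verts ∩ T'.verts).card = 2
  symm := by
    refine ⟨fun T T' h => ?_⟩
    rwa [Finset.inter_comm]
  loopless := by
    refine ⟨fun T h => ?_⟩
    rw [Finset.inter_self, T.card_eq] at h
    omega

/-- The Farey vertex represented by the (not necessarily reduced) fraction `a/b`,
with the conventions `a/b = (-a)/(-b)` and `x/0 = ∞`. -/
def mkFarey (a b : ℤ) : FareyVertex :=
  if b = 0 then none else some ((a : ℚ) / (b : ℚ))

lemma neighbor_int_succ (i : ℤ) :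
    FareyNeighbor (some (i : ℚ)) (some ((i + 1 : ℤ) : ℚ)) := by
  have hn : (((i + 1 : ℤ) : ℚ)).num = i + 1 := Rat.num_intCast _
  have hd : (((i + 1 : ℤ) : ℚ)).den = 1 := Rat.den_intCast _
  simp only [FareyNeighbor, fnum, fden, hn, hd, Rat.num_intCast, Rat.den_intCast]
  simp

lemma neighbor_int_inf (i : ℤ) : FareyNeighbor (some (i : ℚ)) none := by
  simp [FareyNeighbor, fnum, fden]

lemma neighbor_symm {x y : FareyVertex} (h : FareyNeighbor x y) : FareyNeighbor y x := by
  unfold FareyNeighbor at h ⊢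
  rw [← abs_neg]
  convert h using 2
  ring

/-- `△⁽ⁱ⁾`: the Farey triangle with vertices `i`, `i+1` and `∞`. -/
def stdTriangle (i : ℤ) : FareyTriangle where
  verts := {some (i : ℚ), some ((i + 1 : ℤ) : ℚ), none}
  card_eq := by
    have h1 : (some (i : ℚ) : FareyVertex) ≠ some ((i + 1 : ℤ) : ℚ) := by
      simp only [ne_eq, Option.some.injEq]
      intro h
      have : (i : ℚ) = (i : ℚ) + 1 := by push_cast at h ⊢; linarith
      linarith
    simp [Finset.card_insert_of_notMem, h1]
  neighbors := by
    intro x hx y hy hxy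
    have h1 := neighbor_int_succ i
    have h2 := neighbor_int_inf i
    have h3 := neighbor_int_inf (i + 1)
    simp only [Finset.mem_insert, Finset.mem_singleton] at hx hy
    rcases hx with rfl | rfl | rfl <;> rcases hy with rfl | rfl | rfl <;>
      first
        | exact absurd rfl hxy
        | assumption
        | exact neighbor_symm h1
        | exact neighbor_symm h2
        | exact neighbor_symm h3

/-- `S p q` is the sum of the partial quotients in the expansion of `p/q`
as a regular continued fraction (for coprime `p ≥ 0`, `q ≥ 1`), with `S 0 1 = 0`. -/
def S (p q : ℕ) : ℕ :=
  if h : q = 0 then 0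
  else p / q + S q (p % q)
termination_by q
decreasing_by exact Nat.mod_lt p (Nat.pos_of_ne_zero h)


lemma fcop (x : FareyVertex) : Int.gcd (fnum x) (fden x) = 1 := by
  cases x with
  | none => simp [fnum, fden]
  | some r => simpa [fnum, fden, Int.gcd] using r.reduced

lemma mk_self (x : FareyVertex) : mkFarey (fnum x) (fden x) = x := by
  cases x with
  | none => simp [mkFarey, fnum, fden]
  | some r =>
      have : (r.den : ℤ) ≠ 0 := by exact_mod_cast r.den_nz
      simp [mkFarey, fnum, fden, this, Rat.num_div_den]

lemma mk_neg (a b : ℤ) : mkFarey (-a) (-b) = mkFarey a b := by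
  unfold mkFarey
  by_cases hb : b = 0
  · simp [hb]
  · simp only [neg_eq_zero, hb, if_false]
    push_cast
    rw [neg_div_neg_eq]

lemma mk_num_den (a b : ℤ) (h : Int.gcd a b = 1) :
    (fnum (mkFarey a b) = a ∧ fden (mkFarey a b) = b) ∨
    (fnum (mkFarey a b) = -a ∧ fden (mkFarey a b) = -b) := by
  rcases lt_trichotomy b 0 with hb | hb | hb
  · rw [← mk_neg]
    have h' : Int.gcd (-a) (-b) = 1 := by simpa using h
    have hb' : 0 < -b := by omega
    have hcop : Nat.Coprime (-a).natAbs (-b).natAbs := h'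
    rw [mkFarey, if_neg (by omega : ¬(-b : ℤ) = 0)]
    right
    constructor
    · simpa [fnum] using Rat.num_div_eq_of_coprime hb' hcop
    · simpa [fden] using Rat.den_div_eq_of_coprime hb' hcop
  · subst hb
    simp only [Int.gcd, Int.natAbs_zero, Nat.gcd_zero_right] at h
    have : a = 1 ∨ a = -1 := by omega
    rcases this with rfl | rfl
    · left; simp [mkFarey, fnum, fden]
    · right; simp [mkFarey, fnum, fden]
  · have hcop : Nat.Coprime a.natAbs b.natAbs := h
    rw [mkFarey, if_neg (by omega : ¬b = 0)]
    left
    constructor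
    · simpa [fnum] using Rat.num_div_eq_of_coprime hb hcop
    · simpa [fden] using Rat.den_div_eq_of_coprime hb hcop

lemma neighbor_ne {x y : FareyVertex} (h : FareyNeighbor x y) : x ≠ y := by
  rintro rfl
  simp [FareyNeighbor, mul_comm] at h

lemma int_abs_one {x : ℤ} (h : |x| = 1) : x = 1 ∨ x = -1 :=
  (abs_eq (by norm_num : (0:ℤ) ≤ 1)).mp h

lemma cop_of {x y c d : ℤ} (h : |x * d - y * c| = 1) : Int.gcd x y = 1 := by
  apply Int.isCoprime_iff_gcd_eq_one.mp
  rcases int_abs_one h with h1 | h1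
  · exact ⟨d, -c, by linear_combination h1⟩
  · exact ⟨-d, c, by linear_combination -h1⟩

lemma neighbor_of (u x : FareyVertex) (p q : ℤ)
    (hpq : (fnum x = p ∧ fden x = q) ∨ (fnum x = -p ∧ fden x = -q))
    (habs : |fnum u * q - fden u * p| = 1) : FareyNeighbor u x := by
  unfold FareyNeighbor
  rcases hpq with ⟨h1, h2⟩ | ⟨h1, h2⟩ <;> rw [h1, h2]
  · exact habs
  · rw [show fnum u * -q - fden u * -p = -(fnum u * q - fden u * p) by ring, abs_neg]
    exact habs

lemma exists_triangle {u w x : FareyVertex} (huw : FareyNeighbor u w)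
    (hux : FareyNeighbor u x) (hwx : FareyNeighbor w x) :
    ∃ T : FareyTriangle, T.verts = {u, w, x} := by
  refine ⟨⟨{u, w, x}, ?_, ?_⟩, rfl⟩
  · have h1 := neighbor_ne huw
    have h2 := neighbor_ne hux
    have h3 := neighbor_ne hwx
    rw [Finset.card_insert_of_notMem (by simp [h1, h2]),
      Finset.card_insert_of_notMem (by simp [h3]), Finset.card_singleton]
  · intro y hy z hz hyz
    simp only [Finset.mem_insert, Finset.mem_singleton] at hy hz
    rcases hy with rfl | rfl | rfl <;> rcases hz with rfl | rfl | rfl <;>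
      first
        | exact absurd rfl hyz
        | assumption
        | exact neighbor_symm huw
        | exact neighbor_symm hux
        | exact neighbor_symm hwx

lemma card3_ne {α : Type*} [DecidableEq α] {u w x : α}
    (h : ({u, w, x} : Finset α).card = 3) : u ≠ w ∧ x ≠ u ∧ x ≠ w := by
  refine ⟨fun he => ?_, fun he => ?_, fun he => ?_⟩
  · subst he
    rw [show ({u, u, x} : Finset α) = insert u {x} by simp] at h
    have := Finset.card_insert_le u ({x} : Finset α)
    simp at this; omega
  · subst he
    rw [show ({x, w, x} : Finset α) = insert x {w} by ext y; simp; tauto] at h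
    have := Finset.card_insert_le x ({w} : Finset α)
    simp at this; omega
  · subst he
    rw [show ({u, x, x} : Finset α) = insert u {x} by simp] at h
    have := Finset.card_insert_le u ({x} : Finset α)
    simp at this; omega

theorem farey_neighbors_in_exactly_two_triangles (u w : FareyVertex) (h : FareyNeighbor u w) :
    (∀ x : FareyVertex,
        (∃ T : FareyTriangle, T.verts = {u, w, x}) ↔
          (x = mkFarey (fnum u + fnum w) (fden u + fden w) ∨
           x = mkFarey (fnum u - fnum w) (fden u - fden w))) ∧
    {T : FareyTriangle | u ∈ T.verts ∧ w ∈ T.verts}.ncard = 2 := by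
  classical
  have hdet : |fnum u * fden w - fden u * fnum w| = 1 := h
  have hcop1 : Int.gcd (fnum u + fnum w) (fden u + fden w) = 1 :=
    cop_of (c := fnum w) (d := fden w)
      (by rw [show (fnum u + fnum w) * fden w - (fden u + fden w) * fnum w =
          fnum u * fden w - fden u * fnum w by ring]; exact hdet)
  have hcop2 : Int.gcd (fnum u - fnum w) (fden u - fden w) = 1 :=
    cop_of (c := fnum w) (d := fden w)
      (by rw [show (fnum u - fnum w) * fden w - (fden u - fden w) * fnum w =
          fnum u * fden w - fden u * fnum w by ring]; exact hdet)
  have hx1 := mk_num_den _ _ hcop1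
  have hx2 := mk_num_den _ _ hcop2
  have hn1u : FareyNeighbor u (mkFarey (fnum u + fnum w) (fden u + fden w)) :=
    neighbor_of _ _ _ _ hx1
      (by rw [show fnum u * (fden u + fden w) - fden u * (fnum u + fnum w) =
          fnum u * fden w - fden u * fnum w by ring]; exact hdet)
  have hn1w : FareyNeighbor w (mkFarey (fnum u + fnum w) (fden u + fden w)) :=
    neighbor_of _ _ _ _ hx1
      (by rw [show fnum w * (fden u + fden w) - fden w * (fnum u + fnum w) =
          -(fnum u * fden w - fden u * fnum w) by ring, abs_neg]; exact hdet)
  have hn2u : FareyNeighbor u (mkFarey (fnum u - fnum w) (fden u - fden w)) :=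
    neighbor_of _ _ _ _ hx2
      (by rw [show fnum u * (fden u - fden w) - fden u * (fnum u - fnum w) =
          -(fnum u * fden w - fden u * fnum w) by ring, abs_neg]; exact hdet)
  have hn2w : FareyNeighbor w (mkFarey (fnum u - fnum w) (fden u - fden w)) :=
    neighbor_of _ _ _ _ hx2
      (by rw [show fnum w * (fden u - fden w) - fden w * (fnum u - fnum w) =
          -(fnum u * fden w - fden u * fnum w) by ring, abs_neg]; exact hdet)
  have keyA : ∀ x : FareyVertex, FareyNeighbor u x → FareyNeighbor w x →
      (x = mkFarey (fnum u + fnum w) (fden u + fden w) ∨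
       x = mkFarey (fnum u - fnum w) (fden u - fden w)) := by
    intro x hux hwx
    unfold FareyNeighbor at hux hwx
    have idp : fnum x * (fnum u * fden w - fden u * fnum w) =
        -fnum u * (fnum w * fden x - fden w * fnum x) +
          fnum w * (fnum u * fden x - fden u * fnum x) := by ring
    have idq : fden x * (fnum u * fden w - fden u * fnum w) =
        -fden u * (fnum w * fden x - fden w * fnum x) +
          fden w * (fnum u * fden x - fden u * fnum x) := by ring
    rcases int_abs_one hdet with hε | hε <;>
    rcases int_abs_one hwx with hα | hα <;>
    rcases int_abs_one hux with hβ | hβ <;>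
    rw [hε, hα, hβ] at idp idq <;>
    first
      | (left; rw [← mk_self x, show fnum x = fnum u + fnum w by linarith,
          show fden x = fden u + fden w by linarith])
      | (left; rw [← mk_self x, show fnum x = -(fnum u + fnum w) by linarith,
          show fden x = -(fden u + fden w) by linarith]; exact mk_neg _ _)
      | (right; rw [← mk_self x, show fnum x = fnum u - fnum w by linarith,
          show fden x = fden u - fden w by linarith])
      | (right; rw [← mk_self x, show fnum x = -(fnum u - fnum w) by linarith,
          show fden x = -(fden u - fden w) by linarith]; exact mk_neg _ _)
  have main : ∀ x : FareyVertex,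
      (∃ T : FareyTriangle, T.verts = {u, w, x}) ↔
        (x = mkFarey (fnum u + fnum w) (fden u + fden w) ∨
         x = mkFarey (fnum u - fnum w) (fden u - fden w)) := by
    intro x
    constructor
    · rintro ⟨T, hT⟩
      have hcard := T.card_eq
      rw [hT] at hcard
      obtain ⟨huw', hxu, hxw⟩ := card3_ne hcard
      have hux : FareyNeighbor u x :=
        T.neighbors u (by rw [hT]; simp) x (by rw [hT]; simp) hxu.symm
      have hwx : FareyNeighbor w x :=
        T.neighbors w (by rw [hT]; simp) x (by rw [hT]; simp) hxw.symm
      exact keyA x hux hwx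
    · rintro (rfl | rfl)
      · exact exists_triangle h hn1u hn1w
      · exact exists_triangle h hn2u hn2w
  refine ⟨main, ?_⟩
  obtain ⟨T1, hT1⟩ := (main _).mpr (Or.inl rfl)
  obtain ⟨T2, hT2⟩ := (main _).mpr (Or.inr rfl)
  have hx1x2 : mkFarey (fnum u + fnum w) (fden u + fden w) ≠
      mkFarey (fnum u - fnum w) (fden u - fden w) := by
    intro he
    have e1 : fnum (mkFarey (fnum u + fnum w) (fden u + fden w)) =
        fnum (mkFarey (fnum u - fnum w) (fden u - fden w)) := by rw [he]
    have e2 : fden (mkFarey (fnum u + fnum w) (fden u + fden w)) =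
        fden (mkFarey (fnum u - fnum w) (fden u - fden w)) := by rw [he]
    have gu := fcop u
    have gw := fcop w
    rcases hx1 with ⟨p1, q1⟩ | ⟨p1, q1⟩ <;> rcases hx2 with ⟨p2, q2⟩ | ⟨p2, q2⟩ <;>
      rw [p1, p2] at e1 <;> rw [q1, q2] at e2 <;>
      first
        | (rw [show fnum w = 0 by omega, show fden w = 0 by omega] at gw; simp at gw)
        | (rw [show fnum u = 0 by omega, show fden u = 0 by omega] at gu; simp at gu)
  have hux1 : u ≠ mkFarey (fnum u + fnum w) (fden u + fden w) := neighbor_ne hn1u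
  have hwx1 : w ≠ mkFarey (fnum u + fnum w) (fden u + fden w) := neighbor_ne hn1w
  have hT12 : T1 ≠ T2 := by
    intro he
    have hmem : mkFarey (fnum u + fnum w) (fden u + fden w) ∈ T2.verts := by
      rw [← he, hT1]; simp
    rw [hT2] at hmem
    simp only [Finset.mem_insert, Finset.mem_singleton] at hmem
    rcases hmem with h' | h' | h'
    · exact hux1 h'.symm
    · exact hwx1 h'.symm
    · exact hx1x2 h'
  have hseteq : {T : FareyTriangle | u ∈ T.verts ∧ w ∈ T.verts} = {T1, T2} := by
    ext T
    simp only [Set.mem_setOf_eq, Set.mem_insert_iff, Set.mem_singleton_iff]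
    constructor
    · rintro ⟨hu, hw⟩
      have huw' : u ≠ w := neighbor_ne h
      have hsub : ({u, w} : Finset FareyVertex) ⊆ T.verts := by
        intro y hy
        simp only [Finset.mem_insert, Finset.mem_singleton] at hy
        rcases hy with rfl | rfl
        · exact hu
        · exact hw
      have hcards : ({u, w} : Finset FareyVertex).card = 2 := by
        rw [Finset.card_insert_of_notMem (by simp [huw']), Finset.card_singleton]
      have hdiff : (T.verts \ {u, w}).card = 1 := by
        rw [Finset.card_sdiff_of_subset hsub, T.card_eq, hcards]
      obtain ⟨x, hx⟩ := Finset.card_eq_one.mp hdiff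
      have hTv : T.verts = {u, w, x} := by
        have hun := Finset.union_sdiff_of_subset hsub
        rw [hx] at hun
        rw [← hun]
        ext y
        simp
      rcases (main x).mp ⟨T, hTv⟩ with h' | h'
      · left; ext1; rw [hTv, h', hT1]
      · right; ext1; rw [hTv, h', hT2]
    · rintro (rfl | rfl)
      · rw [hT1]; exact ⟨by simp, by simp⟩
      · rw [hT2]; exact ⟨by simp, by simp⟩
  rw [hseteq, Set.ncard_pair hT12]
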